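/- arXiv:2011.04991 — 2 statements merged into one kernel-verified Lean document; each statement's English description precedes it below -/
import Mathlib

section
/- Equivalence of discrete norms on the WG space: there exist positive constants C₁, C₂ independent of h such that for all (v_h, V_h) ∈ ℍ_h, C₁‖(v_h,V_h)‖²_{1,h} ≤ |||(v_h,V_h)|||²_h ≤ C₂‖(v_h,V_h)‖²_{1,h}, where ‖(v_h,V_h)‖²_{1,h} = Σ_T (‖∇v_0‖²_{L^2(T)} + h_T^{-1}‖Q_b v_0 − v_b‖²_{L^2(∂T)}) + Σ_l ‖v_b − V_{h,l}‖²_{L^2(e_l)} and |||(v_h,V_h)|||²_h = a_s(1,(v_h,V_h),(v_h,V_h)). -/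
open MeasureTheory Filter Topology
open scoped ENNReal NNReal

noncomputable section

abbrev Pt : Type := EuclideanSpace ℝ (Fin 2)

/-- partial derivative of a scalar field -/
def pd (φ : Pt → ℝ) (i : Fin 2) (x : Pt) : ℝ := fderiv ℝ φ x (EuclideanSpace.single i 1)

/-- divergence of a vector field on ℝ² -/
def div2 (g : Pt → Pt) (x : Pt) : ℝ := ∑ i, fderiv ℝ g x (EuclideanSpace.single i 1) i

/-- admissible test vector fields for the total variation -/
def IsTestField (Ω : Set Pt) (g : Pt → Pt) : Prop :=
  ContDiff ℝ 1 g ∧ HasCompactSupport g ∧ tsupport g ⊆ Ω ∧ ∀ x i, |g x i| ≤ 1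

/-- total variation of `q` on `Ω`, by duality -/
def TV (Ω : Set Pt) (q : Pt → ℝ) : ℝ≥0∞ :=
  ⨆ g ∈ {g | IsTestField Ω g}, ENNReal.ofReal (∫ x in Ω, q x * div2 g x)

def MemBV (Ω : Set Pt) (q : Pt → ℝ) : Prop := IntegrableOn q Ω ∧ TV Ω q < ⊤

/-- `du` is the weak gradient of `u` on `Ω` -/
def IsWeakGrad (Ω : Set Pt) (u : Pt → ℝ) (du : Pt → Pt) : Prop :=
  ∀ φ : Pt → ℝ, ContDiff ℝ 1 φ → HasCompactSupport φ → tsupport φ ⊆ Ω →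
    ∀ i, ∫ x in Ω, u x * pd φ i x = - ∫ x in Ω, du x i * φ x

/-- membership in H¹(Ω), represented by a pair (u, du) -/
def MemH1 (Ω : Set Pt) (u : Pt → ℝ) (du : Pt → Pt) : Prop :=
  MemLp u 2 (volume.restrict Ω) ∧ MemLp du 2 (volume.restrict Ω) ∧ IsWeakGrad Ω u du

/-- membership in ℍ = H¹(Ω) ⊗ ℝ^L_⋄ (with square-integrable electrode traces) -/
def MemHH (Ω : Set Pt) {L : ℕ} (e : Fin L → Set Pt) (u : Pt → ℝ) (du : Pt → Pt)
    (U : Fin L → ℝ) : Prop :=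
  MemH1 Ω u du ∧ (∀ l, MemLp u 2 (μH[1].restrict (e l))) ∧ ∑ l, U l = 0

/-- the CEM trilinear form a(σ,(u,U),(v,V)) -/
def aForm (Ω : Set Pt) {L : ℕ} (e : Fin L → Set Pt) (z : Fin L → ℝ) (σ : Pt → ℝ)
    (u : Pt → ℝ) (du : Pt → Pt) (U : Fin L → ℝ)
    (v : Pt → ℝ) (dv : Pt → Pt) (V : Fin L → ℝ) : ℝ :=
  (∫ x in Ω, σ x * ∑ i, du x i * dv x i) +
    ∑ l, (z l)⁻¹ * ∫ x in e l, (u x - U l) * (v x - V l) ∂μH[1]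

/-- (u,du,U) is a weak solution of the complete electrode model -/
def IsCEMSol (Ω : Set Pt) {L : ℕ} (e : Fin L → Set Pt) (z : Fin L → ℝ) (σ : Pt → ℝ)
    (I : Fin L → ℝ) (u : Pt → ℝ) (du : Pt → Pt) (U : Fin L → ℝ) : Prop :=
  MemHH Ω e u du U ∧
    ∀ v dv V, MemHH Ω e v dv V → aForm Ω e z σ u du U v dv V = ∑ l, I l * V l

/-- admissible conductivities -/
def MemA (Ω : Set Pt) (lam : ℝ) (σ : Pt → ℝ) : Prop :=
  MemBV Ω σ ∧ ∀ᵐ x ∂(volume.restrict Ω), lam ≤ σ x ∧ σ x ≤ lam⁻¹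

/-- geometric setting of the electrodes -/
def ElectrodeSetup (Ω : Set Pt) {L : ℕ} (e : Fin L → Set Pt) : Prop :=
  IsOpen Ω ∧ Bornology.IsBounded Ω ∧ IsPreconnected Ω ∧
  (∀ l, e l ⊆ frontier Ω) ∧ (∀ i j, i ≠ j → e i ∩ e j = ∅) ∧
  (∀ l, 0 < μH[1] (e l) ∧ μH[1] (e l) < ⊤)

/- ## triangles and triangulations -/

def tri (p : Fin 3 → Pt) : Set Pt := convexHull ℝ (Set.range p)
def hT (p : Fin 3 → Pt) : ℝ := Real.sqrt (volume (tri p)).toReal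
def seg2 (p : Fin 3 → Pt) (k : Fin 3) : Set Pt := segment ℝ (p (k + 1)) (p (k + 2))
def edgeLen (p : Fin 3 → Pt) (k : Fin 3) : ℝ := (μH[1] (seg2 p k)).toReal

/-- shape regularity with parameter ρ -/
def ShapeReg (ρ : ℝ) (p : Fin 3 → Pt) : Prop :=
  AffineIndependent ℝ p ∧ ∃ x, Metric.ball x (ρ * Metric.diam (tri p)) ⊆ tri p

def rot2 (x : Pt) : Pt := (WithLp.equiv 2 (Fin 2 → ℝ)).symm ![x 1, -(x 0)]

open Classical in
/-- unit outward normal to the edge `seg2 p k` of the triangle `tri p` -/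
def outNormal (p : Fin 3 → Pt) (k : Fin 3) : Pt :=
  let d := rot2 (p (k + 2) - p (k + 1))
  if inner ℝ d (p k - p (k + 1)) ≤ (0:ℝ) then ‖d‖⁻¹ • d else -(‖d‖⁻¹ • d)

structure Triangulation2 (Ω : Set Pt) where
  n : ℕ
  vert : Fin n → Fin 3 → Pt
  indep : ∀ t, AffineIndependent ℝ (vert t)
  cover : Ω ⊆ ⋃ t, tri (vert t)
  subset : ∀ t, tri (vert t) ⊆ closure Ω
  disj : ∀ t s, t ≠ s → interior (tri (vert t)) ∩ interior (tri (vert s)) = ∅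

/-- the triangulation is ρ-shape-regular with mesh size at most h -/
def Triangulation2.Reg {Ω : Set Pt} (𝒯 : Triangulation2 Ω) (ρ h : ℝ) : Prop :=
  (∀ t, ShapeReg ρ (𝒯.vert t)) ∧ ∀ t, hT (𝒯.vert t) ≤ h

/-- each electrode is a union of boundary edges of the mesh -/
def ElecMesh {Ω : Set Pt} (𝒯 : Triangulation2 Ω) {L : ℕ} (e : Fin L → Set Pt) : Prop :=
  ∀ l, ∃ S : Finset (Fin 𝒯.n × Fin 3), e l = ⋃ p ∈ S, seg2 (𝒯.vert p.1) p.2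

/- ## projections -/

def IsAff (π : Pt → ℝ) : Prop := ∃ a : ℝ, ∃ b : Pt, ∀ x, π x = a + ∑ i, b i * x i

/-- π is the L²(T)-projection of φ onto P₁(T) -/
def IsL2ProjP1 (T : Set Pt) (φ π : Pt → ℝ) : Prop :=
  IsAff π ∧ ∀ ψ, IsAff ψ → ∫ x in T, (φ x - π x) * ψ x = 0

/-- the edgewise L² projection onto constants, i.e. the mean value on the edge -/
def edgeMean (p : Fin 3 → Pt) (k : Fin 3) (φ : Pt → ℝ) : ℝ :=
  (edgeLen p k)⁻¹ * ∫ x in seg2 p k, φ x ∂μH[1]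

/-- the mean value of a vector field on T = L² projection onto [P₀(T)]² -/
def cellMeanV (T : Set Pt) (g : Pt → Pt) : Pt := ((volume T).toReal)⁻¹ • ∫ x in T, g x

/-- classical gradient as a vector field -/
def gradF (φ : Pt → ℝ) (x : Pt) : Pt :=
  (WithLp.equiv 2 (Fin 2 → ℝ)).symm (fun i => pd φ i x)

/-- gradient within a set -/
def gradW (φ : Pt → ℝ) (S : Set Pt) (x : Pt) : Pt :=
  (WithLp.equiv 2 (Fin 2 → ℝ)).symm
    (fun i => fderivWithin ℝ φ S x (EuclideanSpace.single i 1))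

/-- squared H^k norm on S (for functions with classical derivatives) -/
def HkSqW (k : ℕ) (S : Set Pt) (φ : Pt → ℝ) : ℝ :=
  ∑ j ∈ Finset.range (k + 1), ∫ x in S, ‖iteratedFDerivWithin ℝ j φ S x‖ ^ 2

/- ## the lowest-order weak Galerkin space -/

structure WGfun {Ω : Set Pt} (𝒯 : Triangulation2 Ω) where
  v0 : Fin 𝒯.n → Pt → ℝ
  vb : Fin 𝒯.n → Fin 3 → ℝ
  aff : ∀ t, IsAff (v0 t)
  compat : ∀ t s k k', seg2 (𝒯.vert t) k = seg2 (𝒯.vert s) k' → vb t k = vb s k'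

/-- the weak gradient of a WG function on element t (a constant vector) -/
def wgrad {Ω : Set Pt} {𝒯 : Triangulation2 Ω} (v : WGfun 𝒯) (t : Fin 𝒯.n) : Pt :=
  ((volume (tri (𝒯.vert t))).toReal)⁻¹ •
    ∑ k, (v.vb t k * edgeLen (𝒯.vert t) k) • outNormal (𝒯.vert t) k

open Classical in
/-- the stabilized WG bilinear form a_s(σ_h, (u,U), (v,V)) -/
def asForm {Ω : Set Pt} {L : ℕ} (𝒯 : Triangulation2 Ω) (e : Fin L → Set Pt)
    (z : Fin L → ℝ) (σc : Fin 𝒯.n → ℝ)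
    (u : WGfun 𝒯) (U : Fin L → ℝ) (v : WGfun 𝒯) (V : Fin L → ℝ) : ℝ :=
  (∑ t, σc t * (inner ℝ (wgrad u t) (wgrad v t) : ℝ) * (volume (tri (𝒯.vert t))).toReal)
  + (∑ l, (z l)⁻¹ * ∑ t, ∑ k, if seg2 (𝒯.vert t) k ⊆ e l then
        (u.vb t k - U l) * (v.vb t k - V l) * edgeLen (𝒯.vert t) k else 0)
  + (∑ t, (hT (𝒯.vert t))⁻¹ * ∑ k,
        (edgeMean (𝒯.vert t) k (u.v0 t) - u.vb t k) *
        (edgeMean (𝒯.vert t) k (v.v0 t) - v.vb t k) * edgeLen (𝒯.vert t) k)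

/-- (u_h, U_h) solves the WG scheme -/
def IsWGSol {Ω : Set Pt} {L : ℕ} (𝒯 : Triangulation2 Ω) (e : Fin L → Set Pt)
    (z : Fin L → ℝ) (σc : Fin 𝒯.n → ℝ) (I : Fin L → ℝ)
    (u : WGfun 𝒯) (U : Fin L → ℝ) : Prop :=
  (∑ l, U l = 0) ∧ ∀ (v : WGfun 𝒯) (V : Fin L → ℝ), (∑ l, V l = 0) →
    asForm 𝒯 e z σc u U v V = ∑ l, I l * V l

open Classical in
/-- the piecewise constant function with values c on the elements -/
def pcFun {Ω : Set Pt} (𝒯 : Triangulation2 Ω) (c : Fin 𝒯.n → ℝ) (x : Pt) : ℝ :=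
  ∑ t, if x ∈ interior (tri (𝒯.vert t)) then c t else 0

/-- the discrete total variation N_h -/
def Nh {Ω : Set Pt} (𝒯 : Triangulation2 Ω) (c : Fin 𝒯.n → ℝ) : ℝ :=
  (1 / 2) * ∑ t, ∑ s, |c t - c s| *
    (μH[1] (frontier (tri (𝒯.vert t)) ∩ frontier (tri (𝒯.vert s)))).toReal

end

open Classical in
/-- the discrete norm ‖(v,V)‖²_{1,h} on the WG space -/
noncomputable def wgNorm1Sq {Ω : Set Pt} {L : ℕ} (𝒯 : Triangulation2 Ω)
    (e : Fin L → Set Pt) (v : WGfun 𝒯) (V : Fin L → ℝ) : ℝ :=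
  (∑ t, ((∫ x in tri (𝒯.vert t), ‖gradF (v.v0 t) x‖ ^ 2)
      + (hT (𝒯.vert t))⁻¹ *
          ∑ k, (edgeMean (𝒯.vert t) k (v.v0 t) - v.vb t k) ^ 2 * edgeLen (𝒯.vert t) k))
  + ∑ l, ∑ t, ∑ k, if seg2 (𝒯.vert t) k ⊆ e l then
      (v.vb t k - V l) ^ 2 * edgeLen (𝒯.vert t) k else 0

section Aux
open MeasureTheory

namespace WGaux

lemma pt_ext {x y : Pt} (h : ∀ i, x i = y i) : x = y := PiLp.ext h

lemma pt_inner (x y : Pt) : (inner ℝ x y : ℝ) = x 0 * y 0 + x 1 * y 1 := by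
  rw [PiLp.inner_apply, Fin.sum_univ_two]; simp [RCLike.inner_apply, mul_comm]

lemma pt_norm_sq (x : Pt) : ‖x‖ ^ 2 = x 0 ^ 2 + x 1 ^ 2 := by
  rw [← real_inner_self_eq_norm_sq, pt_inner]; ring

lemma rot2_zero (x : Pt) : rot2 x 0 = x 1 := rfl
lemma rot2_one (x : Pt) : rot2 x 1 = -(x 0) := rfl

lemma norm_rot2 (x : Pt) : ‖rot2 x‖ = ‖x‖ := by
  have h1 : ‖rot2 x‖ ^ 2 = ‖x‖ ^ 2 := by
    rw [pt_norm_sq, pt_norm_sq, rot2_zero, rot2_one]; ring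
  have := sq_abs ‖rot2 x‖
  nlinarith [norm_nonneg (rot2 x), norm_nonneg x]

/-- the continuous linear map x ↦ ∑ i, b i * x i -/
noncomputable def linOf (b : Pt) : Pt →L[ℝ] ℝ := ∑ i, b i • (EuclideanSpace.proj (𝕜 := ℝ) i)

lemma linOf_apply (b x : Pt) : linOf b x = ∑ i, b i * x i := by
  simp [linOf, ContinuousLinearMap.sum_apply]

lemma aff_hasFDerivAt (a : ℝ) (b : Pt) (x : Pt) :
    HasFDerivAt (fun x : Pt => a + ∑ i, b i * x i) (linOf b) x := by
  have : (fun x : Pt => a + ∑ i, b i * x i) = fun x => a + linOf b x := by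
    funext y; rw [linOf_apply]
  rw [this]
  have := (hasFDerivAt_const a x).add (linOf b).hasFDerivAt
  rwa [zero_add] at this

lemma aff_continuous (a : ℝ) (b : Pt) :
    Continuous (fun x : Pt => a + ∑ i, b i * x i) := by
  have : (fun x : Pt => a + ∑ i, b i * x i) = fun x => a + linOf b x := by
    funext y; rw [linOf_apply]
  rw [this]; exact continuous_const.add (linOf b).continuous

lemma gradF_aff (a : ℝ) (b : Pt) (x : Pt) :
    gradF (fun x : Pt => a + ∑ i, b i * x i) x = b := by
  apply pt_ext; intro i
  show (fun j => pd (fun x : Pt => a + ∑ i, b i * x i) j x) i = b i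
  unfold pd
  rw [(aff_hasFDerivAt a b x).fderiv]
  simp only [linOf_apply]
  fin_cases i <;> simp [Fin.sum_univ_two, EuclideanSpace.single_apply]

end WGaux
end Aux
section Aux2
open MeasureTheory
namespace WGaux

lemma measure_segment (x y : Pt) : μH[1] (segment ℝ x y) = ENNReal.ofReal (dist x y) := by
  rw [hausdorffMeasure_segment, edist_dist]

lemma restrict_segment (x y : Pt) :
    μH[1].restrict (segment ℝ x y) =
      Measure.map (AffineMap.lineMap x y)
        ((ENNReal.ofReal (dist x y)) • (volume.restrict (Set.Icc (0:ℝ) 1))) := by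
  have hmeas : Measurable (AffineMap.lineMap x y : ℝ → Pt) :=
    (AffineMap.lineMap_continuous).measurable
  ext A hA
  rw [Measure.map_apply hmeas hA, Measure.smul_apply, Measure.restrict_apply hA,
    Measure.restrict_apply (hmeas hA)]
  have hseg : segment ℝ x y = (AffineMap.lineMap x y : ℝ → Pt) '' Set.Icc 0 1 :=
    segment_eq_image_lineMap ℝ x y
  have : A ∩ segment ℝ x y =
      (AffineMap.lineMap x y : ℝ → Pt) '' (Set.Icc 0 1 ∩ (AffineMap.lineMap x y : ℝ → Pt) ⁻¹' A) := by
    rw [Set.image_inter_preimage, ← hseg, Set.inter_comm]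
  rw [this, MeasureTheory.hausdorffMeasure_lineMap_image, hausdorffMeasure_real]
  rw [Set.inter_comm, smul_eq_mul]
  congr 1
  rw [dist_nndist]
  exact (Real.toNNReal_coe).symm

lemma integral_segment (x y : Pt) (f : Pt → ℝ) (hf : Continuous f) :
    ∫ p in segment ℝ x y, f p ∂μH[1] =
      dist x y * ∫ t in Set.Icc (0:ℝ) 1, f (AffineMap.lineMap x y t) := by
  rw [restrict_segment]
  rw [integral_map (AffineMap.lineMap_continuous).measurable.aemeasurable
    hf.aestronglyMeasurable.aemeasurable.aestronglyMeasurable]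
  rw [integral_smul_measure, ENNReal.toReal_ofReal dist_nonneg]
  rfl

lemma lineMap_affine (a : ℝ) (b : Pt) (x y : Pt) (t : ℝ) :
    (fun p : Pt => a + ∑ i, b i * p i) (AffineMap.lineMap x y t) =
      (fun p : Pt => a + ∑ i, b i * p i) x
        + t * ((fun p : Pt => a + ∑ i, b i * p i) y - (fun p : Pt => a + ∑ i, b i * p i) x) := by
  have h : ∀ i, (AffineMap.lineMap x y t : Pt) i = x i + t * (y i - x i) := by
    intro i
    simp [AffineMap.lineMap_apply, smul_eq_mul, mul_comm]
    ring
  simp only [Fin.sum_univ_two, h]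
  ring

lemma integral_Icc01_affine (c d : ℝ) :
    ∫ t in Set.Icc (0:ℝ) 1, (c + t * d) = c + d / 2 := by
  rw [MeasureTheory.integral_Icc_eq_integral_Ioc,
    ← intervalIntegral.integral_of_le (zero_le_one)]
  have : ∫ t in (0:ℝ)..1, (c + t * d) = ∫ t in (0:ℝ)..1, (c + d * t) := by
    congr 1; funext t; ring
  rw [this]
  have h1 : IntervalIntegrable (fun _ : ℝ => c) volume 0 1 :=
    (continuous_const : Continuous fun _ : ℝ => c).intervalIntegrable 0 1
  have h2 : IntervalIntegrable (fun t : ℝ => d * t) volume 0 1 := by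
    apply Continuous.intervalIntegrable; fun_prop
  rw [intervalIntegral.integral_add h1 h2, intervalIntegral.integral_const_mul, integral_id]
  simp
  ring

lemma segment_integral_affine (x y : Pt) (a : ℝ) (b : Pt) :
    ∫ p in segment ℝ x y, (a + ∑ i, b i * p i) ∂μH[1] =
      dist x y * (((a + ∑ i, b i * x i) + (a + ∑ i, b i * y i)) / 2) := by
  rw [integral_segment x y _ (aff_continuous a b)]
  congr 1
  have : ∀ t : ℝ, (a + ∑ i, b i * (AffineMap.lineMap x y t : Pt) i) =
      (a + ∑ i, b i * x i) + t * ((a + ∑ i, b i * y i) - (a + ∑ i, b i * x i)) := by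
    intro t; exact lineMap_affine a b x y t
  rw [show (fun t => a + ∑ i, b i * (AffineMap.lineMap x y t : Pt) i) =
      (fun t => (a + ∑ i, b i * x i) + t * ((a + ∑ i, b i * y i) - (a + ∑ i, b i * x i)))
    from funext this] at *
  · rw [integral_Icc01_affine]; ring
end WGaux
end Aux2
section Aux3
open MeasureTheory
namespace WGaux

/-- the determinant of the triangle -/
noncomputable def detp (p : Fin 3 → Pt) : ℝ :=
  (p 1 0 - p 0 0) * (p 2 1 - p 0 1) - (p 1 1 - p 0 1) * (p 2 0 - p 0 0)

def T0 : Set Pt := {x : Pt | 0 ≤ x 0 ∧ 0 ≤ x 1 ∧ x 0 + x 1 ≤ 1}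

def Sstd : Set (ℝ × ℝ) := {q : ℝ × ℝ | 0 ≤ q.1 ∧ 0 ≤ q.2 ∧ q.1 + q.2 ≤ 1}

lemma measurable_Sstd : MeasurableSet Sstd := by
  have : Sstd = (Prod.fst ⁻¹' Set.Ici (0:ℝ)) ∩ ((Prod.snd ⁻¹' Set.Ici (0:ℝ)) ∩
      ((fun q : ℝ × ℝ => q.1 + q.2) ⁻¹' Set.Iic (1:ℝ))) := by
    ext q; simp [Sstd, Set.mem_Ici, Set.mem_Iic, and_assoc]
  rw [this]
  exact (measurable_fst measurableSet_Ici).inter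
    ((measurable_snd measurableSet_Ici).inter
      ((measurable_fst.add measurable_snd) measurableSet_Iic))

lemma vol_Sstd : volume Sstd = ENNReal.ofReal (1/2) := by
  rw [Measure.volume_eq_prod, Measure.prod_apply measurable_Sstd]
  have hslice : ∀ a : ℝ, (Prod.mk a ⁻¹' Sstd) =
      if 0 ≤ a then Set.Icc 0 (1 - a) else ∅ := by
    intro a; ext bb
    simp only [Set.mem_preimage, Sstd, Set.mem_setOf_eq]
    split_ifs with h
    · simp only [Set.mem_Icc]; constructor
      · rintro ⟨_, h1, h2⟩; exact ⟨h1, by linarith⟩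
      · rintro ⟨h1, h2⟩; exact ⟨h, h1, by linarith⟩
    · simp only [Set.mem_empty_iff_false, iff_false]; rintro ⟨h1, _, _⟩; exact h h1
  have hint : ∀ a : ℝ, volume (Prod.mk a ⁻¹' Sstd) =
      Set.indicator (Set.Icc (0:ℝ) 1) (fun a => ENNReal.ofReal (1 - a)) a := by
    intro a; rw [hslice a]
    split_ifs with h
    · rw [Real.volume_Icc]
      by_cases h1 : a ≤ 1
      · rw [Set.indicator_of_mem (Set.mem_Icc.2 ⟨h, h1⟩)]; congr 1; ring
      · rw [Set.indicator_of_notMem (fun hm => h1 (Set.mem_Icc.1 hm).2)]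
        rw [ENNReal.ofReal_eq_zero.2 (by linarith)]
    · rw [Set.indicator_of_notMem (fun hm => h (Set.mem_Icc.1 hm).1), measure_empty]
  calc (∫⁻ a, volume (Prod.mk a ⁻¹' Sstd))
      = ∫⁻ a, Set.indicator (Set.Icc (0:ℝ) 1) (fun a => ENNReal.ofReal (1 - a)) a := by
        congr 1; funext a; exact hint a
    _ = ∫⁻ a in Set.Icc (0:ℝ) 1, ENNReal.ofReal (1 - a) :=
        lintegral_indicator measurableSet_Icc _
    _ = ENNReal.ofReal (∫ a in Set.Icc (0:ℝ) 1, (1 - a)) := by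
        rw [← MeasureTheory.ofReal_integral_eq_lintegral_ofReal]
        · exact (continuous_const.sub continuous_id).integrableOn_Icc
        · exact (ae_restrict_iff' measurableSet_Icc).2
            (MeasureTheory.ae_of_all _ (fun x hx => by simp; linarith [hx.2]))
    _ = ENNReal.ofReal (1/2) := by
        congr 1
        have : (fun a : ℝ => 1 - a) = (fun a : ℝ => 1 + a * (-1)) := by funext a; ring
        rw [this, integral_Icc01_affine]; norm_num

lemma vol_T0 : volume T0 = ENNReal.ofReal (1/2) := by
  have key : T0 = (MeasurableEquiv.toLp 2 (Fin 2 → ℝ)).symm ⁻¹'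
      ((MeasurableEquiv.finTwoArrow : (Fin 2 → ℝ) ≃ᵐ (ℝ × ℝ)) ⁻¹' Sstd) := by
    ext x
    simp [T0, Sstd, MeasurableEquiv.finTwoArrow]
  rw [key]
  rw [(EuclideanSpace.volume_preserving_symm_measurableEquiv_toLp (Fin 2)).measure_preimage
    ((MeasurableEquiv.finTwoArrow.measurable measurable_Sstd)).nullMeasurableSet]
  rw [(MeasureTheory.volume_preserving_finTwoArrow ℝ).measure_preimage
    measurable_Sstd.nullMeasurableSet]
  exact vol_Sstd

noncomputable def gstd : Fin 3 → Pt :=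
  ![0, EuclideanSpace.single (0 : Fin 2) (1:ℝ), EuclideanSpace.single (1 : Fin 2) (1:ℝ)]

lemma convex_T0 : Convex ℝ T0 := by
  intro x hx y hy s t hs ht hst
  obtain ⟨hx0, hx1, hx2⟩ := hx; obtain ⟨hy0, hy1, hy2⟩ := hy
  have e0 : (s • x + t • y) 0 = s * x 0 + t * y 0 := rfl
  have e1 : (s • x + t • y) 1 = s * x 1 + t * y 1 := rfl
  refine ⟨?_, ?_, ?_⟩
  · rw [e0]; positivity
  · rw [e1]; positivity
  · rw [e0, e1]; nlinarith

lemma hull_gstd : convexHull ℝ (Set.range gstd) = T0 := by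
  apply Set.Subset.antisymm
  · apply convexHull_min _ convex_T0
    rintro _ ⟨k, rfl⟩
    fin_cases k <;>
      refine ⟨?_, ?_, ?_⟩ <;>
        simp [gstd, EuclideanSpace.single_apply]
  · intro x hx
    obtain ⟨h0, h1, h2⟩ := hx
    have hmem : ∀ k : Fin 3, gstd k ∈ convexHull ℝ (Set.range gstd) :=
      fun k => subset_convexHull ℝ _ ⟨k, rfl⟩
    have hsum := (convex_convexHull ℝ (Set.range gstd)).sum_mem (t := Finset.univ)
      (w := ![1 - x 0 - x 1, x 0, x 1]) (z := gstd)
      (by intro k _; fin_cases k <;> simp <;> linarith)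
      (by simp [Fin.sum_univ_three]; ring)
      (fun k _ => hmem k)
    have hx_eq : x = ∑ k : Fin 3, (![1 - x 0 - x 1, x 0, x 1] : Fin 3 → ℝ) k • gstd k := by
      apply pt_ext; intro i
      rw [Fin.sum_univ_three]
      fin_cases i <;>
        simp [gstd, EuclideanSpace.single_apply, PiLp.add_apply, PiLp.smul_apply,
          smul_eq_mul]
    rw [hx_eq]; exact hsum

/-- the linear map sending e₀ ↦ p1 - p0, e₁ ↦ p2 - p0 -/
noncomputable def Mlin (p : Fin 3 → Pt) : Pt →ₗ[ℝ] Pt where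
  toFun x := x 0 • (p 1 - p 0) + x 1 • (p 2 - p 0)
  map_add' x y := by
    show (x 0 + y 0) • _ + (x 1 + y 1) • _ = _
    rw [add_smul, add_smul]; abel
  map_smul' c x := by
    show (c * x 0) • _ + (c * x 1) • _ = _
    rw [mul_smul, mul_smul, RingHom.id_apply, smul_add]

/-- the affine map x ↦ p0 + Mlin p x -/
noncomputable def Faff (p : Fin 3 → Pt) : Pt →ᵃ[ℝ] Pt where
  toFun x := p 0 + Mlin p x
  linear := Mlin p
  map_vadd' q v := by
    show p 0 + Mlin p (v + q) = Mlin p v + (p 0 + Mlin p q)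
    rw [map_add]; abel

lemma Faff_gstd (p : Fin 3 → Pt) : (Faff p) ∘ gstd = p := by
  funext k
  fin_cases k <;>
  · show p 0 + ((gstd _) 0 • (p 1 - p 0) + (gstd _) 1 • (p 2 - p 0)) = _
    simp [gstd, EuclideanSpace.single_apply]
    try abel

lemma tri_eq_image (p : Fin 3 → Pt) :
    tri p = (Faff p) '' (convexHull ℝ (Set.range gstd)) := by
  rw [AffineMap.image_convexHull, ← Set.range_comp, Faff_gstd]
  rfl

lemma det_Mlin (p : Fin 3 → Pt) : LinearMap.det (Mlin p) = detp p := by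
  set b := (EuclideanSpace.basisFun (Fin 2) ℝ).toBasis
  rw [← LinearMap.det_toMatrix b, Matrix.det_fin_two]
  have hentry : ∀ i j : Fin 2, LinearMap.toMatrix b b (Mlin p) i j = (Mlin p (b j)) i := by
    intro i j
    rw [LinearMap.toMatrix_apply]
    simp [b, OrthonormalBasis.coe_toBasis_repr_apply, EuclideanSpace.basisFun_repr]
  have hb : ∀ j : Fin 2, (b j : Pt) = EuclideanSpace.single j 1 := by
    intro j; simp [b, OrthonormalBasis.coe_toBasis, EuclideanSpace.basisFun_apply]
  have happ0 : ∀ i : Fin 2, (Mlin p (EuclideanSpace.single (0 : Fin 2) (1:ℝ))) i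
      = p 1 i - p 0 i := by
    intro i
    show ((EuclideanSpace.single (0:Fin 2) (1:ℝ) : Pt) 0 • (p 1 - p 0)
        + (EuclideanSpace.single (0:Fin 2) (1:ℝ) : Pt) 1 • (p 2 - p 0)) i = _
    simp [EuclideanSpace.single_apply, PiLp.add_apply, PiLp.smul_apply, PiLp.sub_apply]
  have happ1 : ∀ i : Fin 2, (Mlin p (EuclideanSpace.single (1 : Fin 2) (1:ℝ))) i
      = p 2 i - p 0 i := by
    intro i
    show ((EuclideanSpace.single (1:Fin 2) (1:ℝ) : Pt) 0 • (p 1 - p 0)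
        + (EuclideanSpace.single (1:Fin 2) (1:ℝ) : Pt) 1 • (p 2 - p 0)) i = _
    simp [EuclideanSpace.single_apply, PiLp.add_apply, PiLp.smul_apply, PiLp.sub_apply]
  simp only [hentry, hb, happ0, happ1, detp]
  ring

lemma volume_tri (p : Fin 3 → Pt) :
    volume (tri p) = ENNReal.ofReal (|detp p| / 2) := by
  rw [tri_eq_image, hull_gstd]
  have himg : (Faff p) '' T0 = (fun y => p 0 + y) '' ((Mlin p) '' T0) := by
    rw [Set.image_image]; rfl
  rw [himg, Set.image_add_left, measure_preimage_add,
    Measure.addHaar_image_linearMap, det_Mlin, vol_T0,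
    ← ENNReal.ofReal_mul (abs_nonneg _)]
  congr 1; ring

end WGaux
end Aux3
section Aux4
open MeasureTheory
namespace WGaux

lemma detp_ne_zero {p : Fin 3 → Pt} (hp : AffineIndependent ℝ p) : detp p ≠ 0 := by
  intro hD
  set u : Pt := p 1 - p 0 with hu
  set v : Pt := p 2 - p 0 with hv
  have hDuv : u 0 * v 1 - u 1 * v 0 = 0 := by
    simpa [detp, hu, hv, PiLp.sub_apply] using hD
  have hp10 : p 1 ≠ p 0 := hp.injective.ne (by decide : (1 : Fin 3) ≠ 0)
  have hexists : ∃ c1 c2 : ℝ, (c1 ≠ 0 ∨ c2 ≠ 0) ∧ c1 • u + c2 • v = 0 := by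
    by_cases h : u 1 = 0 ∧ v 1 = 0
    · by_cases h' : u 0 = 0 ∧ v 0 = 0
      · exfalso; apply hp10
        have : u = 0 := by
          apply pt_ext; intro i; fin_cases i
          · simpa using h'.1
          · simpa using h.1
        rw [hu, sub_eq_zero] at this; exact this
      · refine ⟨v 0, -(u 0), ?_, ?_⟩
        · by_contra hc
          push_neg at hc
          exact h' ⟨by simpa using hc.2, hc.1⟩
        · apply pt_ext; intro i
          have e : ∀ i, (v 0 • u + (-(u 0)) • v) i = v 0 * u i - u 0 * v i := by
            intro i
            simp [PiLp.add_apply, PiLp.smul_apply, smul_eq_mul]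
            ring
          rw [e]
          fin_cases i
          · show v 0 * u 0 - u 0 * v 0 = (0:Pt) 0; simp; ring
          · show v 0 * u 1 - u 0 * v 1 = (0:Pt) 1
            simp [h.1, h.2]
    · refine ⟨v 1, -(u 1), ?_, ?_⟩
      · by_contra hc
        push_neg at hc
        exact h ⟨by simpa using hc.2, hc.1⟩
      · apply pt_ext; intro i
        have e : ∀ i, (v 1 • u + (-(u 1)) • v) i = v 1 * u i - u 1 * v i := by
          intro i
          simp [PiLp.add_apply, PiLp.smul_apply, smul_eq_mul]
          ring
        rw [e]
        fin_cases i
        · show v 1 * u 0 - u 1 * v 0 = (0:Pt) 0; simp; linarith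
        · show v 1 * u 1 - u 1 * v 1 = (0:Pt) 1; simp; ring
  obtain ⟨c1, c2, hc, hsum⟩ := hexists
  set w : Fin 3 → ℝ := ![-(c1 + c2), c1, c2] with hw
  have hwsum : ∑ i, w i = 0 := by simp [hw, Fin.sum_univ_three]; try ring
  have hvsub : Finset.univ.weightedVSub p w = (0 : Pt) := by
    rw [Finset.weightedVSub_eq_linear_combination _ hwsum]
    have : ∑ i, w i • p i = c1 • u + c2 • v := by
      rw [Fin.sum_univ_three, hu, hv]
      show (-(c1+c2)) • p 0 + c1 • p 1 + c2 • p 2 = _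
      rw [smul_sub, smul_sub]
      module
    rw [this, hsum]
  have := (affineIndependent_iff_of_fintype ℝ p).1 hp w hwsum hvsub
  rcases hc with hc | hc
  · exact hc (by simpa [hw] using this 1)
  · exact hc (by simpa [hw] using this 2)

lemma volume_tri_toReal (p : Fin 3 → Pt) : (volume (tri p)).toReal = |detp p| / 2 := by
  rw [volume_tri, ENNReal.toReal_ofReal (by positivity)]

lemma hT_sq (p : Fin 3 → Pt) : hT p ^ 2 = (volume (tri p)).toReal := by
  rw [hT, Real.sq_sqrt ENNReal.toReal_nonneg]

lemma vol_tri_pos {p : Fin 3 → Pt} (hp : AffineIndependent ℝ p) :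
    0 < (volume (tri p)).toReal := by
  rw [volume_tri_toReal]
  have := detp_ne_zero hp
  positivity

lemma hT_pos {p : Fin 3 → Pt} (hp : AffineIndependent ℝ p) : 0 < hT p := by
  rw [hT]; exact Real.sqrt_pos.2 (vol_tri_pos hp)

lemma edgeLen_eq (p : Fin 3 → Pt) (k : Fin 3) :
    edgeLen p k = dist (p (k + 1)) (p (k + 2)) := by
  rw [edgeLen, seg2, measure_segment, ENNReal.toReal_ofReal dist_nonneg]

lemma edge_vertex_ne {p : Fin 3 → Pt} (hp : AffineIndependent ℝ p) (k : Fin 3) :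
    p (k + 1) ≠ p (k + 2) := by
  apply hp.injective.ne
  fin_cases k <;> decide

lemma edgeLen_pos {p : Fin 3 → Pt} (hp : AffineIndependent ℝ p) (k : Fin 3) :
    0 < edgeLen p k := by
  rw [edgeLen_eq]; exact dist_pos.2 (edge_vertex_ne hp k)

lemma isBounded_tri (p : Fin 3 → Pt) : Bornology.IsBounded (tri p) :=
  ((Set.finite_range p).isCompact_convexHull (𝕜 := ℝ)).isBounded

lemma mem_tri (p : Fin 3 → Pt) (i : Fin 3) : p i ∈ tri p :=
  subset_convexHull ℝ _ (Set.mem_range_self i)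

lemma edgeLen_le_diam (p : Fin 3 → Pt) (k : Fin 3) :
    edgeLen p k ≤ Metric.diam (tri p) := by
  rw [edgeLen_eq]
  exact Metric.dist_le_diam_of_mem (isBounded_tri p) (mem_tri p _) (mem_tri p _)

lemma diam_le_hT {ρ : ℝ} {p : Fin 3 → Pt} (hρ : 0 < ρ) (hreg : ShapeReg ρ p) :
    ρ * Metric.diam (tri p) ≤ hT p := by
  obtain ⟨hp, x, hball⟩ := hreg
  set r := ρ * Metric.diam (tri p) with hr
  rcases le_or_gt r 0 with h | h
  · exact h.trans (Real.sqrt_nonneg _)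
  · have hvol : volume (Metric.ball x r) ≤ volume (tri p) := measure_mono hball
    rw [EuclideanSpace.volume_ball] at hvol
    have hcard : (Fintype.card (Fin 2)) = 2 := by simp
    rw [hcard] at hvol
    have hconst : Real.sqrt Real.pi ^ 2 / Real.Gamma ((2:ℕ) / 2 + 1) = Real.pi := by
      rw [Real.sq_sqrt Real.pi_pos.le]
      norm_num [Real.Gamma_two]
    rw [hconst] at hvol
    have h2 : ENNReal.ofReal r ^ 2 * ENNReal.ofReal Real.pi
        = ENNReal.ofReal (r ^ 2 * Real.pi) := by
      rw [← ENNReal.ofReal_pow h.le, ← ENNReal.ofReal_mul (by positivity)]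
    rw [h2, volume_tri] at hvol
    have h3 : r ^ 2 * Real.pi ≤ |detp p| / 2 :=
      (ENNReal.ofReal_le_ofReal_iff (by positivity)).1 hvol
    have h4 : r ^ 2 ≤ hT p ^ 2 := by
      rw [hT_sq, volume_tri_toReal]
      nlinarith [Real.pi_gt_three, sq_nonneg r]
    calc r = Real.sqrt (r ^ 2) := (Real.sqrt_sq h.le).symm
      _ ≤ Real.sqrt (hT p ^ 2) := Real.sqrt_le_sqrt h4
      _ = hT p := Real.sqrt_sq (Real.sqrt_nonneg _)

lemma edgeLen_le_hT {ρ : ℝ} {p : Fin 3 → Pt} (hρ : 0 < ρ) (hreg : ShapeReg ρ p) (k : Fin 3) :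
    edgeLen p k ≤ hT p / ρ := by
  rw [le_div_iff₀ hρ]
  calc edgeLen p k * ρ = ρ * edgeLen p k := by ring
    _ ≤ ρ * Metric.diam (tri p) := by
        have := edgeLen_le_diam p k
        nlinarith
    _ ≤ hT p := diam_le_hT hρ hreg

end WGaux
end Aux4
section Aux5
open MeasureTheory
namespace WGaux

lemma inner_rot_edge (p : Fin 3 → Pt) (k : Fin 3) :
    (inner ℝ (rot2 (p (k + 2) - p (k + 1))) (p k - p (k + 1)) : ℝ) = - detp p := by
  fin_cases k
  · show (inner ℝ (rot2 (p 2 - p 1)) (p 0 - p 1) : ℝ) = - detp p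
    rw [pt_inner, rot2_zero, rot2_one]
    simp only [PiLp.sub_apply, detp]; ring
  · show (inner ℝ (rot2 (p 0 - p 2)) (p 1 - p 2) : ℝ) = - detp p
    rw [pt_inner, rot2_zero, rot2_one]
    simp only [PiLp.sub_apply, detp]; ring
  · show (inner ℝ (rot2 (p 1 - p 0)) (p 2 - p 0) : ℝ) = - detp p
    rw [pt_inner, rot2_zero, rot2_one]
    simp only [PiLp.sub_apply, detp]; ring

lemma core_id' (q0 q1 q2 : Pt) (a : ℝ) (b : Pt) :
    (((a + ∑ i, b i * q1 i) + (a + ∑ i, b i * q2 i))/2) • rot2 (q2 - q1)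
      + (((a + ∑ i, b i * q2 i) + (a + ∑ i, b i * q0 i))/2) • rot2 (q0 - q2)
      + (((a + ∑ i, b i * q0 i) + (a + ∑ i, b i * q1 i))/2) • rot2 (q1 - q0)
    = (((q1 0 - q0 0) * (q2 1 - q0 1) - (q1 1 - q0 1) * (q2 0 - q0 0)) / 2) • b := by
  have hsmul : ∀ (c : ℝ) (x : Pt) (j : Fin 2), (c • x) j = c * x j := fun _ _ _ => rfl
  have hadd : ∀ (x y : Pt) (j : Fin 2), (x + y) j = x j + y j := fun _ _ _ => rfl
  set L := (((a + ∑ i, b i * q1 i) + (a + ∑ i, b i * q2 i))/2) • rot2 (q2 - q1)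
      + (((a + ∑ i, b i * q2 i) + (a + ∑ i, b i * q0 i))/2) • rot2 (q0 - q2)
      + (((a + ∑ i, b i * q0 i) + (a + ∑ i, b i * q1 i))/2) • rot2 (q1 - q0) with hL
  set R := (((q1 0 - q0 0) * (q2 1 - q0 1) - (q1 1 - q0 1) * (q2 0 - q0 0)) / 2) • b with hR
  have h0 : L 0 = R 0 := by
    rw [hL, hR]
    simp only [hadd, hsmul, rot2_zero, PiLp.sub_apply, Fin.sum_univ_two]
    ring
  have h1 : L 1 = R 1 := by
    rw [hL, hR]
    simp only [hadd, hsmul, rot2_one, PiLp.sub_apply, Fin.sum_univ_two]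
    ring
  apply pt_ext; intro i
  fin_cases i
  · exact h0
  · exact h1

lemma core_id (p : Fin 3 → Pt) (a : ℝ) (b : Pt) :
    ∑ k : Fin 3, (((a + ∑ i, b i * (p (k+1)) i) + (a + ∑ i, b i * (p (k+2)) i))/2) •
        rot2 (p (k+2) - p (k+1))
      = (detp p / 2) • b := by
  rw [Fin.sum_univ_three]
  exact core_id' (p 0) (p 1) (p 2) a b

lemma norm_edge_vec (p : Fin 3 → Pt) (k : Fin 3) :
    ‖rot2 (p (k+2) - p (k+1))‖ = dist (p (k+1)) (p (k+2)) := by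
  rw [norm_rot2, dist_eq_norm']

lemma div_identity {p : Fin 3 → Pt} (hp : AffineIndependent ℝ p) (a : ℝ) (b : Pt) :
    ∑ k : Fin 3, (∫ x in seg2 p k, (a + ∑ i, b i * x i) ∂μH[1]) • outNormal p k
      = (volume (tri p)).toReal • b := by
  have hint : ∀ k : Fin 3, (∫ x in seg2 p k, (a + ∑ i, b i * x i) ∂μH[1]) =
      dist (p (k+1)) (p (k+2)) *
        (((a + ∑ i, b i * (p (k+1)) i) + (a + ∑ i, b i * (p (k+2)) i))/2) := by
    intro k
    exact segment_integral_affine (p (k+1)) (p (k+2)) a b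
  have hd_ne : ∀ k : Fin 3, ‖rot2 (p (k+2) - p (k+1))‖ ≠ 0 := by
    intro k
    rw [norm_edge_vec]
    exact dist_ne_zero.2 (edge_vertex_ne hp k)
  set mval : Fin 3 → ℝ := fun k =>
    ((a + ∑ i, b i * (p (k+1)) i) + (a + ∑ i, b i * (p (k+2)) i))/2 with hmval
  rcases (detp_ne_zero hp).lt_or_gt with hD | hD
  · -- detp p < 0 : outNormal = -(‖d‖⁻¹ • d)
    have hn : ∀ k : Fin 3, outNormal p k
        = -((‖rot2 (p (k+2) - p (k+1))‖)⁻¹ • rot2 (p (k+2) - p (k+1))) := by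
      intro k
      rw [outNormal]
      have : ¬ ((inner ℝ (rot2 (p (k + 2) - p (k + 1))) (p k - p (k + 1)) : ℝ) ≤ 0) := by
        rw [inner_rot_edge]; linarith
      simp only [this, if_false]
    have hterm : ∀ k : Fin 3, (∫ x in seg2 p k, (a + ∑ i, b i * x i) ∂μH[1]) • outNormal p k
        = -(mval k • rot2 (p (k+2) - p (k+1))) := by
      intro k
      rw [hint k, hn k, ← norm_edge_vec, smul_neg, smul_smul, neg_inj]
      congr 1
      rw [mul_inv_eq_iff_eq_mul₀ (hd_ne k)]
      ring
    rw [show (∑ k : Fin 3, (∫ x in seg2 p k, (a + ∑ i, b i * x i) ∂μH[1]) • outNormal p k)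
        = ∑ k : Fin 3, -(mval k • rot2 (p (k+2) - p (k+1))) from Finset.sum_congr rfl
          (fun k _ => hterm k)]
    rw [Finset.sum_neg_distrib, core_id, volume_tri_toReal, abs_of_neg hD]
    rw [← neg_smul]
    congr 1
    ring
  · -- detp p > 0
    have hn : ∀ k : Fin 3, outNormal p k
        = (‖rot2 (p (k+2) - p (k+1))‖)⁻¹ • rot2 (p (k+2) - p (k+1)) := by
      intro k
      rw [outNormal]
      have : (inner ℝ (rot2 (p (k + 2) - p (k + 1))) (p k - p (k + 1)) : ℝ) ≤ 0 := by
        rw [inner_rot_edge]; linarith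
      simp only [this, if_true]
    have hterm : ∀ k : Fin 3, (∫ x in seg2 p k, (a + ∑ i, b i * x i) ∂μH[1]) • outNormal p k
        = mval k • rot2 (p (k+2) - p (k+1)) := by
      intro k
      rw [hint k, hn k, ← norm_edge_vec, smul_smul]
      congr 1
      rw [mul_inv_eq_iff_eq_mul₀ (hd_ne k)]
      ring
    rw [show (∑ k : Fin 3, (∫ x in seg2 p k, (a + ∑ i, b i * x i) ∂μH[1]) • outNormal p k)
        = ∑ k : Fin 3, mval k • rot2 (p (k+2) - p (k+1)) from Finset.sum_congr rfl
          (fun k _ => hterm k)]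
    rw [core_id, volume_tri_toReal, abs_of_pos hD]

lemma norm_outNormal {p : Fin 3 → Pt} (hp : AffineIndependent ℝ p) (k : Fin 3) :
    ‖outNormal p k‖ = 1 := by
  have hd_ne : ‖rot2 (p (k+2) - p (k+1))‖ ≠ 0 := by
    rw [norm_edge_vec]
    exact dist_ne_zero.2 (edge_vertex_ne hp k)
  rw [outNormal]
  split_ifs <;>
    simp [norm_smul, norm_inv, inv_mul_cancel₀ hd_ne]

end WGaux
end Aux5
section Aux6
open MeasureTheory
namespace WGaux

noncomputable def elemA (p : Fin 3 → Pt) : ℝ := (volume (tri p)).toReal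

noncomputable def elemWg (p : Fin 3 → Pt) (vb : Fin 3 → ℝ) : Pt :=
  (elemA p)⁻¹ • ∑ k, (vb k * edgeLen p k) • outNormal p k

noncomputable def elemS (p : Fin 3 → Pt) (v0 : Pt → ℝ) (vb : Fin 3 → ℝ) : ℝ :=
  ∑ k, (edgeMean p k v0 - vb k) ^ 2 * edgeLen p k

lemma elemS_nonneg {p : Fin 3 → Pt} (hp : AffineIndependent ℝ p) (v0 : Pt → ℝ)
    (vb : Fin 3 → ℝ) : 0 ≤ elemS p v0 vb := by
  apply Finset.sum_nonneg; intro k _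
  have := (edgeLen_pos hp k).le
  positivity

lemma grad_integral {p : Fin 3 → Pt} (v0 : Pt → ℝ) (a : ℝ) (b : Pt)
    (hv0 : ∀ x, v0 x = a + ∑ i, b i * x i) :
    ∫ x in tri p, ‖gradF v0 x‖ ^ 2 = ‖b‖ ^ 2 * elemA p := by
  have hv0f : v0 = fun x => a + ∑ i, b i * x i := funext hv0
  have : ∀ x : Pt, ‖gradF v0 x‖ ^ 2 = ‖b‖ ^ 2 := by
    intro x; rw [hv0f, gradF_aff]
  rw [show (fun x => ‖gradF v0 x‖ ^ 2) = fun _ : Pt => ‖b‖ ^ 2 from funext this]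
  rw [MeasureTheory.setIntegral_const, smul_eq_mul, elemA, mul_comm]
  rfl

lemma wg_decomp {p : Fin 3 → Pt} (hp : AffineIndependent ℝ p) (v0 : Pt → ℝ) (a : ℝ) (b : Pt)
    (hv0 : ∀ x, v0 x = a + ∑ i, b i * x i) (vb : Fin 3 → ℝ) :
    elemWg p vb = b + (elemA p)⁻¹ •
      ∑ k, ((vb k - edgeMean p k v0) * edgeLen p k) • outNormal p k := by
  have hApos : 0 < elemA p := vol_tri_pos hp
  have hem : ∀ k, edgeMean p k v0 * edgeLen p k = ∫ x in seg2 p k, v0 x ∂μH[1] := by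
    intro k; rw [edgeMean]
    rw [mul_comm, ← mul_assoc, mul_inv_cancel₀ (edgeLen_pos hp k).ne', one_mul]
  have hv0f : v0 = fun x => a + ∑ i, b i * x i := funext hv0
  have hdiv : ∑ k, (edgeMean p k v0 * edgeLen p k) • outNormal p k = elemA p • b := by
    have : ∀ k : Fin 3, (edgeMean p k v0 * edgeLen p k) • outNormal p k
        = (∫ x in seg2 p k, (a + ∑ i, b i * x i) ∂μH[1]) • outNormal p k := by
      intro k; rw [hem k, hv0f]
    rw [Finset.sum_congr rfl (fun k _ => this k)]
    exact div_identity hp a b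
  have hsplit : ∑ k, (vb k * edgeLen p k) • outNormal p k =
      (∑ k, ((vb k - edgeMean p k v0) * edgeLen p k) • outNormal p k) + elemA p • b := by
    rw [← hdiv, ← Finset.sum_add_distrib]
    apply Finset.sum_congr rfl; intro k _
    rw [← add_smul]
    congr 1
    ring
  rw [elemWg, hsplit, smul_add, smul_smul, inv_mul_cancel₀ hApos.ne', one_smul, add_comm]

lemma r_norm_sq {ρ : ℝ} (hρ : 0 < ρ) {p : Fin 3 → Pt} (hp : AffineIndependent ℝ p)
    (hreg : ShapeReg ρ p) (v0 : Pt → ℝ) (vb : Fin 3 → ℝ) :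
    ‖∑ k, ((vb k - edgeMean p k v0) * edgeLen p k) • outNormal p k‖ ^ 2
      ≤ 3 * (hT p / ρ) * elemS p v0 vb := by
  set δ : Fin 3 → ℝ := fun k => vb k - edgeMean p k v0 with hδ
  set L : Fin 3 → ℝ := fun k => edgeLen p k with hL
  have hLpos : ∀ k, 0 < L k := fun k => edgeLen_pos hp k
  have hr1 : ‖∑ k, (δ k * L k) • outNormal p k‖ ≤ ∑ k, |δ k| * L k := by
    refine (norm_sum_le _ _).trans ?_
    apply Finset.sum_le_sum; intro k _
    rw [norm_smul, norm_outNormal hp k, mul_one, Real.norm_eq_abs, abs_mul,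
      abs_of_pos (hLpos k)]
  have hr2 : ‖∑ k, (δ k * L k) • outNormal p k‖ ^ 2 ≤ (∑ k, |δ k| * L k) ^ 2 := by
    apply pow_le_pow_left₀ (norm_nonneg _) hr1
  have hsq : (∑ k, |δ k| * L k) ^ 2 ≤ 3 * ∑ k, (δ k) ^ 2 * (L k) ^ 2 := by
    rw [Fin.sum_univ_three, Fin.sum_univ_three]
    have e : ∀ k, (|δ k| * L k) ^ 2 = (δ k) ^ 2 * (L k) ^ 2 := by
      intro k; rw [mul_pow, sq_abs]
    nlinarith [sq_nonneg (|δ 0| * L 0 - |δ 1| * L 1), sq_nonneg (|δ 1| * L 1 - |δ 2| * L 2),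
      sq_nonneg (|δ 0| * L 0 - |δ 2| * L 2), e 0, e 1, e 2]
  have hterm : ∀ k : Fin 3, (δ k) ^ 2 * (L k) ^ 2 ≤ (hT p / ρ) * ((δ k) ^ 2 * L k) := by
    intro k
    have h1 : L k ≤ hT p / ρ := edgeLen_le_hT hρ hreg k
    have h2 : 0 ≤ (δ k) ^ 2 * L k := mul_nonneg (sq_nonneg _) (hLpos k).le
    calc (δ k) ^ 2 * (L k) ^ 2 = ((δ k) ^ 2 * L k) * L k := by ring
      _ ≤ ((δ k) ^ 2 * L k) * (hT p / ρ) := by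
          apply mul_le_mul_of_nonneg_left h1 h2
      _ = (hT p / ρ) * ((δ k) ^ 2 * L k) := by ring
  have hS : elemS p v0 vb = ∑ k, (δ k) ^ 2 * L k := by
    rw [elemS]
    apply Finset.sum_congr rfl; intro k _
    rw [hδ, hL]
    simp only
    rw [show edgeMean p k v0 - vb k = -(vb k - edgeMean p k v0) from by ring, neg_pow]
    ring
  calc ‖∑ k, (δ k * L k) • outNormal p k‖ ^ 2 ≤ (∑ k, |δ k| * L k) ^ 2 := hr2
    _ ≤ 3 * ∑ k, (δ k) ^ 2 * (L k) ^ 2 := hsq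
    _ ≤ 3 * ∑ k, (hT p / ρ) * ((δ k) ^ 2 * L k) := by
        exact mul_le_mul_of_nonneg_left
          (Finset.sum_le_sum (fun k (_ : k ∈ Finset.univ) => hterm k)) (by norm_num)
    _ = 3 * (hT p / ρ) * ∑ k, (δ k) ^ 2 * L k := by
        rw [← Finset.mul_sum]; ring
    _ = 3 * (hT p / ρ) * elemS p v0 vb := by rw [hS]

lemma elem_est {ρ : ℝ} (hρ : 0 < ρ) {p : Fin 3 → Pt} (hp : AffineIndependent ℝ p)
    (hreg : ShapeReg ρ p) (v0 : Pt → ℝ) (a : ℝ) (b : Pt)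
    (hv0 : ∀ x, v0 x = a + ∑ i, b i * x i) (vb : Fin 3 → ℝ) :
    ((inner ℝ (elemWg p vb) (elemWg p vb) : ℝ) * elemA p
        ≤ 2 * (∫ x in tri p, ‖gradF v0 x‖ ^ 2) + (6/ρ) * (hT p)⁻¹ * elemS p v0 vb)
    ∧ ((∫ x in tri p, ‖gradF v0 x‖ ^ 2)
        ≤ 2 * ((inner ℝ (elemWg p vb) (elemWg p vb) : ℝ) * elemA p)
          + (6/ρ) * (hT p)⁻¹ * elemS p v0 vb) := by
  have hApos : 0 < elemA p := vol_tri_pos hp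
  set H := hT p with hHdef
  have hHpos : 0 < H := hT_pos hp
  have hA : elemA p = H ^ 2 := (hT_sq p).symm
  set r : Pt := ∑ k, ((vb k - edgeMean p k v0) * edgeLen p k) • outNormal p k with hrdef
  set q := ‖r‖ with hqdef
  have hq0 : 0 ≤ q := norm_nonneg r
  have hq2 : q ^ 2 ≤ 3 * (H / ρ) * elemS p v0 vb := r_norm_sq hρ hp hreg v0 vb
  have hS0 : 0 ≤ elemS p v0 vb := elemS_nonneg hp v0 vb
  set u := ‖elemWg p vb‖ with hudef
  set β := ‖b‖ with hβdef
  have hinner : (inner ℝ (elemWg p vb) (elemWg p vb) : ℝ) = u ^ 2 :=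
    real_inner_self_eq_norm_sq _
  have hG : ∫ x in tri p, ‖gradF v0 x‖ ^ 2 = β ^ 2 * elemA p := grad_integral v0 a b hv0
  have hcnorm : ‖((elemA p)⁻¹ • r : Pt)‖ = (H ^ 2)⁻¹ * q := by
    rw [norm_smul, Real.norm_eq_abs, abs_of_pos (inv_pos.2 hApos), hA]
  have htri1 : u ≤ β + (H ^ 2)⁻¹ * q := by
    rw [hudef, wg_decomp hp v0 a b hv0 vb, ← hrdef, ← hcnorm]
    exact norm_add_le _ _
  have htri2 : β ≤ u + (H ^ 2)⁻¹ * q := by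
    have : b = elemWg p vb - (elemA p)⁻¹ • r := by
      rw [wg_decomp hp v0 a b hv0 vb, ← hrdef]; abel
    rw [hβdef, this, ← hcnorm]
    exact norm_sub_le _ _
  have hu0 : 0 ≤ u := norm_nonneg _
  have hβ0 : 0 ≤ β := norm_nonneg _
  have hx0 : 0 ≤ (H ^ 2)⁻¹ * q := by positivity
  constructor
  · rw [hinner, hG, hA]
    have hu2 : u ^ 2 ≤ 2 * β ^ 2 + 2 * ((H ^ 2)⁻¹ * q) ^ 2 := by
      nlinarith [sq_nonneg (β - (H ^ 2)⁻¹ * q)]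
    calc u ^ 2 * H ^ 2 ≤ (2 * β ^ 2 + 2 * ((H ^ 2)⁻¹ * q) ^ 2) * H ^ 2 := by
          apply mul_le_mul_of_nonneg_right hu2 (sq_nonneg H)
      _ = 2 * (β ^ 2 * H ^ 2) + 2 * (q ^ 2 / H ^ 2) := by
          field_simp
      _ ≤ 2 * (β ^ 2 * H ^ 2) + 2 * ((3 * (H / ρ) * elemS p v0 vb) / H ^ 2) := by
          have : q ^ 2 / H ^ 2 ≤ (3 * (H / ρ) * elemS p v0 vb) / H ^ 2 :=
            (div_le_div_iff_of_pos_right (by positivity)).2 hq2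
          linarith
      _ = 2 * (β ^ 2 * H ^ 2) + 6 / ρ * H⁻¹ * elemS p v0 vb := by
          field_simp; ring
  · rw [hinner, hG, hA]
    have hβ2 : β ^ 2 ≤ 2 * u ^ 2 + 2 * ((H ^ 2)⁻¹ * q) ^ 2 := by
      nlinarith [sq_nonneg (u - (H ^ 2)⁻¹ * q)]
    calc β ^ 2 * H ^ 2 ≤ (2 * u ^ 2 + 2 * ((H ^ 2)⁻¹ * q) ^ 2) * H ^ 2 := by
          apply mul_le_mul_of_nonneg_right hβ2 (sq_nonneg H)
      _ = 2 * (u ^ 2 * H ^ 2) + 2 * (q ^ 2 / H ^ 2) := by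
          field_simp
      _ ≤ 2 * (u ^ 2 * H ^ 2) + 2 * ((3 * (H / ρ) * elemS p v0 vb) / H ^ 2) := by
          have : q ^ 2 / H ^ 2 ≤ (3 * (H / ρ) * elemS p v0 vb) / H ^ 2 :=
            (div_le_div_iff_of_pos_right (by positivity)).2 hq2
          linarith
      _ = 2 * (u ^ 2 * H ^ 2) + 6 / ρ * H⁻¹ * elemS p v0 vb := by
          field_simp; ring

end WGaux
end Aux6
section Aux7
open MeasureTheory
namespace WGaux

lemma edgeLen_nonneg (p : Fin 3 → Pt) (k : Fin 3) : 0 ≤ edgeLen p k :=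
  ENNReal.toReal_nonneg

lemma wgrad_eq_elemWg {Ω : Set Pt} {𝒯 : Triangulation2 Ω} (v : WGfun 𝒯) (t : Fin 𝒯.n) :
    wgrad v t = elemWg (𝒯.vert t) (v.vb t) := rfl

open Classical in
lemma asForm_eq {Ω : Set Pt} {L : ℕ} (𝒯 : Triangulation2 Ω) (e : Fin L → Set Pt)
    (z : Fin L → ℝ) (v : WGfun 𝒯) (V : Fin L → ℝ) :
    asForm 𝒯 e z (fun _ => 1) v V v V
      = (∑ t, (inner ℝ (elemWg (𝒯.vert t) (v.vb t)) (elemWg (𝒯.vert t) (v.vb t)) : ℝ)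
            * elemA (𝒯.vert t))
        + (∑ l, (z l)⁻¹ * ∑ t, ∑ k, if seg2 (𝒯.vert t) k ⊆ e l then
            (v.vb t k - V l) ^ 2 * edgeLen (𝒯.vert t) k else 0)
        + (∑ t, (hT (𝒯.vert t))⁻¹ * elemS (𝒯.vert t) (v.v0 t) (v.vb t)) := by
  rw [asForm]
  congr 1
  · congr 1
    · apply Finset.sum_congr rfl; intro t _
      rw [← wgrad_eq_elemWg]
      show (1:ℝ) * (inner ℝ (wgrad v t) (wgrad v t) : ℝ) * (volume (tri (𝒯.vert t))).toReal = _
      rw [one_mul]; rfl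
    · apply Finset.sum_congr rfl; intro l _
      congr 1
      apply Finset.sum_congr rfl; intro t _
      apply Finset.sum_congr rfl; intro k _
      split_ifs with hc
      · ring
      · rfl
  · apply Finset.sum_congr rfl; intro t _
    rw [elemS]
    congr 1
    apply Finset.sum_congr rfl; intro k _
    ring

open Classical in
lemma wgNorm_eq {Ω : Set Pt} {L : ℕ} (𝒯 : Triangulation2 Ω) (e : Fin L → Set Pt)
    (v : WGfun 𝒯) (V : Fin L → ℝ) :
    wgNorm1Sq 𝒯 e v V
      = ((∑ t, ∫ x in tri (𝒯.vert t), ‖gradF (v.v0 t) x‖ ^ 2)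
          + ∑ t, (hT (𝒯.vert t))⁻¹ * elemS (𝒯.vert t) (v.v0 t) (v.vb t))
        + ∑ l, ∑ t, ∑ k, if seg2 (𝒯.vert t) k ⊆ e l then
            (v.vb t k - V l) ^ 2 * edgeLen (𝒯.vert t) k else 0 := by
  rw [wgNorm1Sq, Finset.sum_add_distrib]
  rfl

end WGaux
end Aux7

open MeasureTheory in
/-- equivalence of the discrete norms `‖·‖_{1,h}` and
`|||·|||_h = a_s(1,·,·)^{1/2}` on the WG space, with constants independent of h. -/
theorem wg_norm_equivalence (Ω : Set Pt) (L : ℕ) (hL : 0 < L)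
    (e : Fin L → Set Pt) (hset : ElectrodeSetup Ω e)
    (z : Fin L → ℝ) (hz : ∀ l, 0 < z l) (ρ : ℝ) (hρ : 0 < ρ) :
    ∃ C₁ C₂ : ℝ, 0 < C₁ ∧ 0 < C₂ ∧
      ∀ h : ℝ, 0 < h → ∀ 𝒯 : Triangulation2 Ω, 𝒯.Reg ρ h → ElecMesh 𝒯 e →
        ∀ (v : WGfun 𝒯) (V : Fin L → ℝ), (∑ l, V l = 0) →
          C₁ * wgNorm1Sq 𝒯 e v V ≤ asForm 𝒯 e z (fun _ => 1) v V v V ∧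
          asForm 𝒯 e z (fun _ => 1) v V v V ≤ C₂ * wgNorm1Sq 𝒯 e v V := by
  classical
  have hK : (0:ℝ) < 6/ρ := by positivity
  set K := 6/ρ with hKdef
  set Cz1 := ∑ l, (z l)⁻¹ with hCz1
  set Cz2 := ∑ l, z l with hCz2
  have hFne : (Finset.univ : Finset (Fin L)).Nonempty := ⟨⟨0, hL⟩, Finset.mem_univ _⟩
  have hCz1pos : 0 < Cz1 := Finset.sum_pos (fun l _ => inv_pos.2 (hz l)) hFne
  have hCz2pos : 0 < Cz2 := Finset.sum_pos (fun l _ => hz l) hFne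
  set M := max (2 + K) Cz2 with hMdef
  set C₂ := max (2 + K) Cz1 with hC2def
  have hMpos : 0 < M := lt_max_of_lt_left (by linarith)
  have hC2pos : 0 < C₂ := lt_max_of_lt_left (by linarith)
  refine ⟨M⁻¹, C₂, inv_pos.2 hMpos, hC2pos, ?_⟩
  intro h hh 𝒯 hreg hmesh v V hV
  have hp : ∀ t, AffineIndependent ℝ (𝒯.vert t) := 𝒯.indep
  have hsh : ∀ t, ShapeReg ρ (𝒯.vert t) := hreg.1
  choose aa bb hab using fun t => v.aff t
  -- basic quantities
  have hWt0 : ∀ t, 0 ≤ (inner ℝ (WGaux.elemWg (𝒯.vert t) (v.vb t))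
      (WGaux.elemWg (𝒯.vert t) (v.vb t)) : ℝ) * WGaux.elemA (𝒯.vert t) :=
    fun t => mul_nonneg real_inner_self_nonneg ENNReal.toReal_nonneg
  have hGt0 : ∀ t, 0 ≤ ∫ x in tri (𝒯.vert t), ‖gradF (v.v0 t) x‖ ^ 2 := by
    intro t
    rw [WGaux.grad_integral _ (aa t) (bb t) (hab t)]
    exact mul_nonneg (sq_nonneg _) ENNReal.toReal_nonneg
  have hSt0 : ∀ t, 0 ≤ (hT (𝒯.vert t))⁻¹ * WGaux.elemS (𝒯.vert t) (v.v0 t) (v.vb t) :=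
    fun t => mul_nonneg (inv_nonneg.2 (WGaux.hT_pos (hp t)).le) (WGaux.elemS_nonneg (hp t) _ _)
  have hEl0 : ∀ l, 0 ≤ ∑ t, ∑ k, if seg2 (𝒯.vert t) k ⊆ e l then
      (v.vb t k - V l) ^ 2 * edgeLen (𝒯.vert t) k else 0 := by
    intro l
    apply Finset.sum_nonneg; intro t _
    apply Finset.sum_nonneg; intro k _
    split_ifs
    · exact mul_nonneg (sq_nonneg _) (WGaux.edgeLen_nonneg _ _)
    · exact le_refl _
  -- element estimates
  have hElem : ∀ t,
      ((inner ℝ (WGaux.elemWg (𝒯.vert t) (v.vb t)) (WGaux.elemWg (𝒯.vert t) (v.vb t)) : ℝ)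
          * WGaux.elemA (𝒯.vert t)
        ≤ 2 * (∫ x in tri (𝒯.vert t), ‖gradF (v.v0 t) x‖ ^ 2)
          + K * ((hT (𝒯.vert t))⁻¹ * WGaux.elemS (𝒯.vert t) (v.v0 t) (v.vb t)))
      ∧ ((∫ x in tri (𝒯.vert t), ‖gradF (v.v0 t) x‖ ^ 2)
        ≤ 2 * ((inner ℝ (WGaux.elemWg (𝒯.vert t) (v.vb t)) (WGaux.elemWg (𝒯.vert t) (v.vb t)) : ℝ)
            * WGaux.elemA (𝒯.vert t))
          + K * ((hT (𝒯.vert t))⁻¹ * WGaux.elemS (𝒯.vert t) (v.v0 t) (v.vb t))) := by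
    intro t
    have hres := WGaux.elem_est hρ (hp t) (hsh t) (v.v0 t) (aa t) (bb t) (hab t) (v.vb t)
    have hKS : K * ((hT (𝒯.vert t))⁻¹ * WGaux.elemS (𝒯.vert t) (v.v0 t) (v.vb t))
        = (6/ρ) * (hT (𝒯.vert t))⁻¹ * WGaux.elemS (𝒯.vert t) (v.v0 t) (v.vb t) := by
      rw [hKdef]; ring
    exact ⟨by rw [hKS]; exact hres.1, by rw [hKS]; exact hres.2⟩
  -- set sums
  set SW := ∑ t, (inner ℝ (WGaux.elemWg (𝒯.vert t) (v.vb t))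
      (WGaux.elemWg (𝒯.vert t) (v.vb t)) : ℝ) * WGaux.elemA (𝒯.vert t) with hSW
  set SG := ∑ t, ∫ x in tri (𝒯.vert t), ‖gradF (v.v0 t) x‖ ^ 2 with hSG
  set SS := ∑ t, (hT (𝒯.vert t))⁻¹ * WGaux.elemS (𝒯.vert t) (v.v0 t) (v.vb t) with hSS
  set SE := ∑ l, ∑ t, ∑ k, (if seg2 (𝒯.vert t) k ⊆ e l then
      (v.vb t k - V l) ^ 2 * edgeLen (𝒯.vert t) k else 0) with hSE
  set SzE := ∑ l, (z l)⁻¹ * ∑ t, ∑ k, (if seg2 (𝒯.vert t) k ⊆ e l then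
      (v.vb t k - V l) ^ 2 * edgeLen (𝒯.vert t) k else 0) with hSzE
  have hSW0 : 0 ≤ SW := Finset.sum_nonneg (fun t _ => hWt0 t)
  have hSG0 : 0 ≤ SG := Finset.sum_nonneg (fun t _ => hGt0 t)
  have hSS0 : 0 ≤ SS := Finset.sum_nonneg (fun t _ => hSt0 t)
  have hSE0 : 0 ≤ SE := Finset.sum_nonneg (fun l _ => hEl0 l)
  have hSzE0 : 0 ≤ SzE := Finset.sum_nonneg (fun l _ =>
    mul_nonneg (inv_pos.2 (hz l)).le (hEl0 l))
  have hSWle : SW ≤ 2 * SG + K * SS := by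
    rw [hSW]
    calc (∑ t, (inner ℝ (WGaux.elemWg (𝒯.vert t) (v.vb t))
        (WGaux.elemWg (𝒯.vert t) (v.vb t)) : ℝ) * WGaux.elemA (𝒯.vert t))
        ≤ ∑ t, (2 * (∫ x in tri (𝒯.vert t), ‖gradF (v.v0 t) x‖ ^ 2)
          + K * ((hT (𝒯.vert t))⁻¹ * WGaux.elemS (𝒯.vert t) (v.v0 t) (v.vb t))) :=
          Finset.sum_le_sum (fun t _ => (hElem t).1)
      _ = 2 * SG + K * SS := by
          rw [Finset.sum_add_distrib, ← Finset.mul_sum, ← Finset.mul_sum, hSG, hSS]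
  have hSGle : SG ≤ 2 * SW + K * SS := by
    rw [hSG]
    calc (∑ t, ∫ x in tri (𝒯.vert t), ‖gradF (v.v0 t) x‖ ^ 2)
        ≤ ∑ t, (2 * ((inner ℝ (WGaux.elemWg (𝒯.vert t) (v.vb t))
            (WGaux.elemWg (𝒯.vert t) (v.vb t)) : ℝ) * WGaux.elemA (𝒯.vert t))
          + K * ((hT (𝒯.vert t))⁻¹ * WGaux.elemS (𝒯.vert t) (v.v0 t) (v.vb t))) :=
          Finset.sum_le_sum (fun t _ => (hElem t).2)
      _ = 2 * SW + K * SS := by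
          rw [Finset.sum_add_distrib, ← Finset.mul_sum, ← Finset.mul_sum, hSW, hSS]
  have hSzEle : SzE ≤ Cz1 * SE := by
    rw [hSzE, hSE, Finset.mul_sum]
    apply Finset.sum_le_sum; intro l _
    apply mul_le_mul_of_nonneg_right _ (hEl0 l)
    rw [hCz1]
    exact Finset.single_le_sum (fun i _ => (inv_pos.2 (hz i)).le) (Finset.mem_univ l)
  have hSEle : SE ≤ Cz2 * SzE := by
    rw [hSE, hSzE, Finset.mul_sum]
    apply Finset.sum_le_sum; intro l _
    have hzC : z l ≤ Cz2 := by
      rw [hCz2]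
      exact Finset.single_le_sum (fun i _ => (hz i).le) (Finset.mem_univ l)
    have h0 : 0 ≤ (z l)⁻¹ * ∑ t, ∑ k, (if seg2 (𝒯.vert t) k ⊆ e l then
        (v.vb t k - V l) ^ 2 * edgeLen (𝒯.vert t) k else 0) :=
      mul_nonneg (inv_pos.2 (hz l)).le (hEl0 l)
    calc (∑ t, ∑ k, (if seg2 (𝒯.vert t) k ⊆ e l then
        (v.vb t k - V l) ^ 2 * edgeLen (𝒯.vert t) k else 0))
        = z l * ((z l)⁻¹ * ∑ t, ∑ k, (if seg2 (𝒯.vert t) k ⊆ e l then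
            (v.vb t k - V l) ^ 2 * edgeLen (𝒯.vert t) k else 0)) := by
          rw [← mul_assoc, mul_inv_cancel₀ (hz l).ne', one_mul]
      _ ≤ Cz2 * ((z l)⁻¹ * ∑ t, ∑ k, (if seg2 (𝒯.vert t) k ⊆ e l then
            (v.vb t k - V l) ^ 2 * edgeLen (𝒯.vert t) k else 0)) :=
          mul_le_mul_of_nonneg_right hzC h0
  -- rewrite the two forms
  have hAs : asForm 𝒯 e z (fun _ => 1) v V v V = SW + SzE + SS := by
    rw [WGaux.asForm_eq 𝒯 e z v V]
  have hNorm : wgNorm1Sq 𝒯 e v V = SG + SS + SE := by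
    rw [WGaux.wgNorm_eq 𝒯 e v V]
  rw [hAs, hNorm]
  constructor
  · -- lower bound : M⁻¹ * (SG + SS + SE) ≤ SW + SzE + SS
    have key : SG + SS + SE ≤ M * (SW + SzE + SS) := by
      have e1 : (2:ℝ) ≤ M := le_trans (by linarith) (le_max_left (2 + K) Cz2)
      have e2 : K + 1 ≤ M := le_trans (by linarith) (le_max_left (2 + K) Cz2)
      have e3 : Cz2 ≤ M := le_max_right _ _
      have f1 : 2 * SW ≤ M * SW := mul_le_mul_of_nonneg_right e1 hSW0
      have f2 : (K + 1) * SS ≤ M * SS := mul_le_mul_of_nonneg_right e2 hSS0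
      have f3 : Cz2 * SzE ≤ M * SzE := mul_le_mul_of_nonneg_right e3 hSzE0
      linarith [hSGle, hSEle, f1, f2, f3]
    calc M⁻¹ * (SG + SS + SE) ≤ M⁻¹ * (M * (SW + SzE + SS)) :=
          mul_le_mul_of_nonneg_left key (inv_pos.2 hMpos).le
      _ = SW + SzE + SS := by
          rw [← mul_assoc, inv_mul_cancel₀ hMpos.ne', one_mul]
  · -- upper bound : SW + SzE + SS ≤ C₂ * (SG + SS + SE)
    have e1 : (2:ℝ) ≤ C₂ := le_trans (by linarith) (le_max_left (2 + K) Cz1)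
    have e2 : K + 1 ≤ C₂ := le_trans (by linarith) (le_max_left (2 + K) Cz1)
    have e3 : Cz1 ≤ C₂ := le_max_right _ _
    have f1 : 2 * SG ≤ C₂ * SG := mul_le_mul_of_nonneg_right e1 hSG0
    have f2 : (K + 1) * SS ≤ C₂ * SS := mul_le_mul_of_nonneg_right e2 hSS0
    have f3 : Cz1 * SE ≤ C₂ * SE := mul_le_mul_of_nonneg_right e3 hSE0
    linarith [hSWle, hSzEle, f1, f2, f3]
end

section
/- Lower semicontinuity of the squared data-misfit along weakly convergent CEM solutions: if σ_n → σ* in L^1(Ω) with σ_n, σ* ∈ 𝒜 and (u_n,U_n) = F(σ_n) are the corresponding CEM solutions with ‖u_n‖_{H^1} bounded, u_n ⇀ u* weakly in H^1(Ω) and U_n → U* in ℝ^L, then (u*,U*) = F(σ*), i.e. the weak limit solves the CEM with conductivity σ*. -/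
open MeasureTheory Filter Topology
open scoped ENNReal NNReal

section AuxWLSC

open MeasureTheory

lemma WLSC.l2_mul_integrable {α : Type*} [MeasurableSpace α] {μ : Measure α} {f g : α → ℝ}
    (hf : MemLp f 2 μ) (hg : MemLp g 2 μ) : Integrable (fun x => f x * g x) μ := by
  have h : (1:ℝ≥0∞)/1 = 1/2 + 1/2 := by rw [ENNReal.add_halves]; simp
  have := hg.smul (r := 1) hf
  rw [memLp_one_iff_integrable] at this
  exact this

lemma WLSC.coord_abs_le_norm (x : Pt) (i : Fin 2) : |x i| ≤ ‖x‖ := by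
  rw [EuclideanSpace.norm_eq, ← Real.sqrt_sq_eq_abs]
  apply Real.sqrt_le_sqrt
  have := Finset.single_le_sum (f := fun j => ‖x j‖ ^ 2) (fun j _ => by positivity)
    (Finset.mem_univ i)
  simpa [Real.norm_eq_abs, sq_abs] using this

lemma WLSC.coord_memL2 {α : Type*} [MeasurableSpace α] {μ : Measure α} {f : α → Pt}
    (hf : MemLp f 2 μ) (i : Fin 2) : MemLp (fun x => f x i) 2 μ := by
  refine MemLp.of_le hf.norm ?_ ?_
  · have := (EuclideanSpace.proj (𝕜 := ℝ) i).continuous.comp_aestronglyMeasurable hf.1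
    simpa using this
  · refine Filter.Eventually.of_forall fun x => ?_
    simpa [Real.norm_eq_abs] using WLSC.coord_abs_le_norm (f x) i

lemma WLSC.dot_integrable {α : Type*} [MeasurableSpace α] {μ : Measure α} {f g : α → Pt}
    (hf : MemLp f 2 μ) (hg : MemLp g 2 μ) :
    Integrable (fun x => ∑ i, f x i * g x i) μ := by
  have h : ∀ i : Fin 2, Integrable (fun x => f x i * g x i) μ :=
    fun i => WLSC.l2_mul_integrable (WLSC.coord_memL2 hf i) (WLSC.coord_memL2 hg i)
  simpa using integrable_finset_sum Finset.univ (fun i _ => h i)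

lemma WLSC.dot_abs_le (a b : Pt) : |∑ i, a i * b i| ≤ ‖a‖ * ‖b‖ := by
  have h : ∑ i, a i * b i = (inner ℝ a b : ℝ) := by
    simp [PiLp.inner_apply, RCLike.inner_apply, conj_trivial]; ring
  rw [h]; exact abs_real_inner_le_norm a b

lemma WLSC.rpow_two_eq (y : ℝ) : y ^ (2:ℝ) = y ^ 2 := by
  rw [show (2:ℝ) = ((2:ℕ):ℝ) by norm_num, Real.rpow_natCast]

end AuxWLSC

/-- if σ_n → σ* in L¹, the CEM solutions (u_n, U_n) = F(σ_n) are
bounded in H¹, u_n ⇀ u* weakly in H¹(Ω) (including weak convergence of the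
traces on the electrodes) and U_n → U*, then (u*,U*) = F(σ*). -/
theorem weak_limit_solves_cem (Ω : Set Pt) (L : ℕ) (hL : 0 < L)
    (e : Fin L → Set Pt) (hset : ElectrodeSetup Ω e)
    (lam : ℝ) (hlam₀ : 0 < lam) (hlam₁ : lam < 1)
    (z : Fin L → ℝ) (hz : ∀ l, 0 < z l)
    (I : Fin L → ℝ) (hI : ∑ l, I l = 0)
    (σn : ℕ → Pt → ℝ) (σs : Pt → ℝ)
    (hσn : ∀ n, MemA Ω lam (σn n)) (hσs : MemA Ω lam σs)
    (hL1 : Filter.Tendsto (fun n => ∫ x in Ω, |σn n x - σs x|) Filter.atTop (nhds 0))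
    (un : ℕ → Pt → ℝ) (dun : ℕ → Pt → Pt) (Un : ℕ → Fin L → ℝ)
    (hsol : ∀ n, IsCEMSol Ω e z (σn n) I (un n) (dun n) (Un n))
    (M : ℝ)
    (hbdd : ∀ n, (∫ x in Ω, (un n x) ^ 2) + (∫ x in Ω, ‖dun n x‖ ^ 2) ≤ M)
    (us : Pt → ℝ) (dus : Pt → Pt) (Us : Fin L → ℝ)
    (hmem : MemHH Ω e us dus Us)
    (hwk0 : ∀ v : Pt → ℝ, MemLp v 2 (volume.restrict Ω) →
      Filter.Tendsto (fun n => ∫ x in Ω, un n x * v x) Filter.atTop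
        (nhds (∫ x in Ω, us x * v x)))
    (hwk1 : ∀ w : Pt → Pt, MemLp w 2 (volume.restrict Ω) →
      Filter.Tendsto (fun n => ∫ x in Ω, ∑ i, dun n x i * w x i) Filter.atTop
        (nhds (∫ x in Ω, ∑ i, dus x i * w x i)))
    (hwk2 : ∀ l, ∀ v : Pt → ℝ, MemLp v 2 (μH[1].restrict (e l)) →
      Filter.Tendsto (fun n => ∫ x in e l, un n x * v x ∂μH[1]) Filter.atTop
        (nhds (∫ x in e l, us x * v x ∂μH[1])))
    (hU : Filter.Tendsto Un Filter.atTop (nhds Us)) :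
    IsCEMSol Ω e z σs I us dus Us := by
  classical
  have hfin : ∀ l, IsFiniteMeasure ((μH[1]).restrict (e l)) := fun l =>
    ⟨by rw [Measure.restrict_apply_univ]; exact (hset.2.2.2.2.2 l).2⟩
  have hσsInt : Integrable σs (volume.restrict Ω) := hσs.1.1
  have hσnInt : ∀ n, Integrable (σn n) (volume.restrict Ω) := fun n => (hσn n).1.1
  have hσs_bd : ∀ᵐ x ∂(volume.restrict Ω), ‖σs x‖ ≤ lam⁻¹ := by
    filter_upwards [hσs.2] with x hx
    rw [Real.norm_eq_abs, abs_of_pos (lt_of_lt_of_le hlam₀ hx.1)]; exact hx.2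
  have hdiff_bd : ∀ n, ∀ᵐ x ∂(volume.restrict Ω), ‖σn n x - σs x‖ ≤ lam⁻¹ + lam⁻¹ := by
    intro n
    filter_upwards [hσs.2, (hσn n).2] with x hx1 hx2
    rw [Real.norm_eq_abs]
    have h1 : |σn n x| ≤ lam⁻¹ := by
      rw [abs_of_pos (lt_of_lt_of_le hlam₀ hx2.1)]; exact hx2.2
    have h2 : |σs x| ≤ lam⁻¹ := by
      rw [abs_of_pos (lt_of_lt_of_le hlam₀ hx1.1)]; exact hx1.2
    calc |σn n x - σs x| ≤ |σn n x| + |σs x| := abs_sub _ _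
      _ ≤ lam⁻¹ + lam⁻¹ := add_le_add h1 h2
  refine ⟨hmem, fun v dv V hv => ?_⟩
  have hv2 : MemLp v 2 (volume.restrict Ω) := hv.1.1
  have hdv2 : MemLp dv 2 (volume.restrict Ω) := hv.1.2.1
  have hun2 : ∀ n, MemLp (un n) 2 (volume.restrict Ω) := fun n => (hsol n).1.1.1
  have hdun2 : ∀ n, MemLp (dun n) 2 (volume.restrict Ω) := fun n => (hsol n).1.1.2.1
  have hS : ∀ n, Integrable (fun x => ∑ i, dun n x i * dv x i) (volume.restrict Ω) :=
    fun n => WLSC.dot_integrable (hdun2 n) hdv2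
  have hdM : ∀ n, ∫ x in Ω, ‖dun n x‖ ^ 2 ≤ M := fun n => by
    have h0 : 0 ≤ ∫ x in Ω, (un n x) ^ 2 :=
      integral_nonneg fun x => sq_nonneg _
    linarith [hbdd n]
  -- ## interior term
  have hw : MemLp (fun x => σs x • dv x) 2 (volume.restrict Ω) := by
    refine MemLp.of_le (hdv2.norm.const_mul lam⁻¹)
      (hσsInt.aestronglyMeasurable.smul hdv2.1) ?_
    filter_upwards [hσs_bd] with x hx
    rw [norm_smul]
    calc ‖σs x‖ * ‖dv x‖ ≤ lam⁻¹ * ‖dv x‖ :=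
          mul_le_mul_of_nonneg_right hx (norm_nonneg _)
      _ ≤ ‖lam⁻¹ * ‖dv x‖‖ := le_abs_self _
  have hwt := hwk1 (fun x => σs x • dv x) hw
  have hwre : ∀ (g : Pt → Pt) (x : Pt),
      ∑ i, g x i * (σs x • dv x) i = σs x * ∑ i, g x i * dv x i := by
    intro g x
    rw [Finset.mul_sum]
    refine Finset.sum_congr rfl fun i _ => ?_
    have hsm : (σs x • dv x) i = σs x * dv x i := rfl
    rw [hsm]; ring
  simp_rw [hwre] at hwt
  have hInt1 : ∀ n, Integrable (fun x => σs x * ∑ i, dun n x i * dv x i)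
      (volume.restrict Ω) :=
    fun n => (hS n).bdd_mul hσsInt.aestronglyMeasurable hσs_bd
  have hInt2 : ∀ n, Integrable (fun x => (σn n x - σs x) * ∑ i, dun n x i * dv x i)
      (volume.restrict Ω) :=
    fun n => (hS n).bdd_mul ((hσnInt n).sub hσsInt).aestronglyMeasurable (hdiff_bd n)
  have hsplit : ∀ n, ∫ x in Ω, σn n x * ∑ i, dun n x i * dv x i
      = (∫ x in Ω, σs x * ∑ i, dun n x i * dv x i)
        + ∫ x in Ω, (σn n x - σs x) * ∑ i, dun n x i * dv x i := by
    intro n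
    rw [← integral_add (hInt1 n) (hInt2 n)]
    congr 1; funext x; ring
  -- MemLp of the weight |σn - σs| * ‖dv‖
  have hq2 : ∀ n, MemLp (fun x => ‖σn n x - σs x‖ * ‖dv x‖) 2 (volume.restrict Ω) := by
    intro n
    refine MemLp.of_le (hdv2.norm.const_mul (lam⁻¹ + lam⁻¹))
      (((hσnInt n).sub hσsInt).aestronglyMeasurable.norm.mul hdv2.1.norm) ?_
    filter_upwards [hdiff_bd n] with x hx
    have h0 : 0 ≤ ‖σn n x - σs x‖ * ‖dv x‖ := by positivity
    rw [Real.norm_eq_abs, abs_of_nonneg h0]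
    calc ‖σn n x - σs x‖ * ‖dv x‖ ≤ (lam⁻¹ + lam⁻¹) * ‖dv x‖ :=
          mul_le_mul_of_nonneg_right hx (norm_nonneg _)
      _ ≤ ‖(lam⁻¹ + lam⁻¹) * ‖dv x‖‖ := le_abs_self _
  -- convergence of J n = ∫ (‖σn - σs‖ ‖dv‖)²
  have hJ0 : Tendsto (fun n => ∫ x in Ω, (‖σn n x - σs x‖ * ‖dv x‖) ^ 2)
      atTop (𝓝 0) := by
    apply tendsto_of_subseq_tendsto
    intro ns hns
    have h1 : Tendsto (fun k => eLpNorm (fun x => σn (ns k) x - σs x) 1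
        (volume.restrict Ω)) atTop (𝓝 0) := by
      have h2 : ∀ k, eLpNorm (fun x => σn (ns k) x - σs x) 1 (volume.restrict Ω)
          = ENNReal.ofReal (∫ x in Ω, |σn (ns k) x - σs x|) := by
        intro k
        have hint : Integrable (fun x => σn (ns k) x - σs x) (volume.restrict Ω) :=
          (hσnInt (ns k)).sub hσsInt
        rw [eLpNorm_one_eq_lintegral_enorm,
          ← ofReal_integral_norm_eq_lintegral_enorm hint]
        simp [Real.norm_eq_abs]
      simp_rw [h2]
      have h3 := (ENNReal.continuous_ofReal.tendsto 0).comp (hL1.comp hns)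
      rw [ENNReal.ofReal_zero] at h3
      exact h3
    have h4 : TendstoInMeasure (volume.restrict Ω) (fun k => σn (ns k)) atTop σs :=
      tendstoInMeasure_of_tendsto_eLpNorm one_ne_zero
        (fun k => (hσnInt (ns k)).aestronglyMeasurable)
        hσsInt.aestronglyMeasurable h1
    obtain ⟨ms, _, hae⟩ := h4.exists_seq_tendsto_ae
    refine ⟨ms, ?_⟩
    have hdct := tendsto_integral_of_dominated_convergence
      (μ := volume.restrict Ω)
      (F := fun k x => (‖σn (ns (ms k)) x - σs x‖ * ‖dv x‖) ^ 2)
      (f := fun _ => (0:ℝ))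
      (bound := fun x => (lam⁻¹ + lam⁻¹) ^ 2 * (‖dv x‖ * ‖dv x‖))
      (fun k => by
        have h1 : AEStronglyMeasurable (fun x => σn (ns (ms k)) x - σs x)
            (volume.restrict Ω) :=
          ((hσnInt (ns (ms k))).sub hσsInt).aestronglyMeasurable
        exact (continuous_pow 2).comp_aestronglyMeasurable
          (h1.norm.mul hdv2.1.norm))
      ((WLSC.l2_mul_integrable hdv2.norm hdv2.norm).const_mul ((lam⁻¹ + lam⁻¹) ^ 2))
      (fun k => by
        filter_upwards [hdiff_bd (ns (ms k))] with x hx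
        have h0 : (0:ℝ) ≤ ‖σn (ns (ms k)) x - σs x‖ * ‖dv x‖ := by positivity
        rw [Real.norm_eq_abs, abs_of_nonneg (by positivity)]
        calc (‖σn (ns (ms k)) x - σs x‖ * ‖dv x‖) ^ 2
            ≤ ((lam⁻¹ + lam⁻¹) * ‖dv x‖) ^ 2 := by
              apply pow_le_pow_left₀ h0
              exact mul_le_mul_of_nonneg_right hx (norm_nonneg _)
          _ = (lam⁻¹ + lam⁻¹) ^ 2 * (‖dv x‖ * ‖dv x‖) := by ring)
      (by
        filter_upwards [hae] with x hx
        have h5 : Tendsto (fun k => σn (ns (ms k)) x - σs x) atTop (𝓝 0) := by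
          simpa using hx.sub (tendsto_const_nhds (x := σs x))
        have h6 := ((h5.norm.mul_const (‖dv x‖)).pow 2)
        simpa using h6)
    simpa using hdct
  -- R n := remainder, tends to 0
  have hRle : ∀ n, |∫ x in Ω, (σn n x - σs x) * ∑ i, dun n x i * dv x i|
      ≤ Real.sqrt (∫ x in Ω, (‖σn n x - σs x‖ * ‖dv x‖) ^ 2) * Real.sqrt M := by
    intro n
    have hstep1 : |∫ x in Ω, (σn n x - σs x) * ∑ i, dun n x i * dv x i|
        ≤ ∫ x in Ω, (‖σn n x - σs x‖ * ‖dv x‖) * ‖dun n x‖ := by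
      calc |∫ x in Ω, (σn n x - σs x) * ∑ i, dun n x i * dv x i|
          = ‖∫ x in Ω, (σn n x - σs x) * ∑ i, dun n x i * dv x i‖ :=
            (Real.norm_eq_abs _).symm
        _ ≤ ∫ x in Ω, ‖(σn n x - σs x) * ∑ i, dun n x i * dv x i‖ :=
            norm_integral_le_integral_norm _
        _ ≤ ∫ x in Ω, (‖σn n x - σs x‖ * ‖dv x‖) * ‖dun n x‖ := by
            refine integral_mono (hInt2 n).norm
              (WLSC.l2_mul_integrable (hq2 n) (hdun2 n).norm) fun x => ?_
            rw [norm_mul]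
            calc ‖σn n x - σs x‖ * ‖∑ i, dun n x i * dv x i‖
                ≤ ‖σn n x - σs x‖ * (‖dun n x‖ * ‖dv x‖) := by
                  refine mul_le_mul_of_nonneg_left ?_ (norm_nonneg _)
                  rw [Real.norm_eq_abs]
                  exact WLSC.dot_abs_le _ _
              _ = (‖σn n x - σs x‖ * ‖dv x‖) * ‖dun n x‖ := by ring
    have hconj : Real.HolderConjugate 2 2 := Real.HolderConjugate.two_two
    have hof : ENNReal.ofReal (2:ℝ) = 2 := by norm_num
    have hstep2 := integral_mul_le_Lp_mul_Lq_of_nonneg hconj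
      (f := fun x => ‖σn n x - σs x‖ * ‖dv x‖) (g := fun x => ‖dun n x‖)
      (μ := volume.restrict Ω)
      (Filter.Eventually.of_forall fun x => by positivity)
      (Filter.Eventually.of_forall fun x => norm_nonneg _)
      (by rw [hof]; exact hq2 n) (by rw [hof]; exact (hdun2 n).norm)
    simp_rw [WLSC.rpow_two_eq] at hstep2
    have hsq : ∀ y : ℝ, 0 ≤ y → y ^ ((1:ℝ)/2) = Real.sqrt y := fun y hy => by
      rw [Real.sqrt_eq_rpow]
    have hy1 : (0:ℝ) ≤ ∫ x in Ω, (‖σn n x - σs x‖ * ‖dv x‖) ^ 2 :=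
      integral_nonneg fun x => by positivity
    have hy2 : (0:ℝ) ≤ ∫ x in Ω, ‖dun n x‖ ^ 2 :=
      integral_nonneg fun x => by positivity
    rw [hsq _ hy1, hsq _ hy2] at hstep2
    calc |∫ x in Ω, (σn n x - σs x) * ∑ i, dun n x i * dv x i|
        ≤ ∫ x in Ω, (‖σn n x - σs x‖ * ‖dv x‖) * ‖dun n x‖ := hstep1
      _ ≤ Real.sqrt (∫ x in Ω, (‖σn n x - σs x‖ * ‖dv x‖) ^ 2)
            * Real.sqrt (∫ x in Ω, ‖dun n x‖ ^ 2) := hstep2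
      _ ≤ Real.sqrt (∫ x in Ω, (‖σn n x - σs x‖ * ‖dv x‖) ^ 2) * Real.sqrt M := by
          exact mul_le_mul_of_nonneg_left (Real.sqrt_le_sqrt (hdM n)) (Real.sqrt_nonneg _)
  have hb : Tendsto (fun n =>
      Real.sqrt (∫ x in Ω, (‖σn n x - σs x‖ * ‖dv x‖) ^ 2) * Real.sqrt M)
      atTop (𝓝 0) := by
    have := hJ0.sqrt.mul_const (Real.sqrt M)
    simpa using this
  have hR0 : Tendsto (fun n => ∫ x in Ω, (σn n x - σs x) * ∑ i, dun n x i * dv x i)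
      atTop (𝓝 0) := by
    have hbneg : Tendsto (fun n =>
        -(Real.sqrt (∫ x in Ω, (‖σn n x - σs x‖ * ‖dv x‖) ^ 2) * Real.sqrt M))
        atTop (𝓝 0) := by simpa using hb.neg
    refine tendsto_of_tendsto_of_tendsto_of_le_of_le hbneg hb ?_ ?_
    · intro n; exact (abs_le.mp (hRle n)).1
    · intro n; exact (abs_le.mp (hRle n)).2
  have hTint : Tendsto (fun n => ∫ x in Ω, σn n x * ∑ i, dun n x i * dv x i)
      atTop (𝓝 (∫ x in Ω, σs x * ∑ i, dus x i * dv x i)) := by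
    have h7 := hwt.add hR0
    rw [add_zero] at h7
    exact Filter.Tendsto.congr (fun n => (hsplit n).symm) h7
  -- ## boundary terms
  have hvl : ∀ l, MemLp (fun x => v x - V l) 2 ((μH[1]).restrict (e l)) := by
    intro l
    haveI := hfin l
    exact (hv.2.1 l).sub (memLp_const (V l))
  have hIv : ∀ l, Integrable (fun x => v x - V l) ((μH[1]).restrict (e l)) :=
    fun l => (hvl l).integrable one_le_two
  have hsplitB : ∀ (l : Fin L) (u' : Pt → ℝ) (c : ℝ),
      MemLp u' 2 ((μH[1]).restrict (e l)) →
      ∫ x in e l, (u' x - c) * (v x - V l) ∂μH[1]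
        = (∫ x in e l, u' x * (v x - V l) ∂μH[1])
          - c * ∫ x in e l, (v x - V l) ∂μH[1] := by
    intro l u' c hu'
    rw [← integral_const_mul, ← integral_sub (WLSC.l2_mul_integrable hu' (hvl l))
      ((hIv l).const_mul c)]
    congr 1; funext x; ring
  have hBl : ∀ l : Fin L,
      Tendsto (fun n => ∫ x in e l, (un n x - Un n l) * (v x - V l) ∂μH[1]) atTop
      (𝓝 (∫ x in e l, (us x - Us l) * (v x - V l) ∂μH[1])) := by
    intro l
    have h1 := hwk2 l (fun x => v x - V l) (hvl l)
    have h2 : Tendsto (fun n => Un n l * ∫ x in e l, (v x - V l) ∂μH[1]) atTop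
        (𝓝 (Us l * ∫ x in e l, (v x - V l) ∂μH[1])) :=
      (tendsto_pi_nhds.mp hU l).mul_const _
    have h3 := h1.sub h2
    rw [← hsplitB l us (Us l) (hmem.2.1 l)] at h3
    exact Filter.Tendsto.congr
      (fun n => (hsplitB l (un n) (Un n l) ((hsol n).1.2.1 l)).symm) h3
  have hTbd : Tendsto (fun n =>
      ∑ l, (z l)⁻¹ * ∫ x in e l, (un n x - Un n l) * (v x - V l) ∂μH[1]) atTop
      (𝓝 (∑ l, (z l)⁻¹ * ∫ x in e l, (us x - Us l) * (v x - V l) ∂μH[1])) :=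
    tendsto_finset_sum _ fun l _ => (hBl l).const_mul _
  -- ## conclusion
  have hmain := hTint.add hTbd
  have hconst : ∀ n, (∫ x in Ω, σn n x * ∑ i, dun n x i * dv x i)
      + ∑ l, (z l)⁻¹ * ∫ x in e l, (un n x - Un n l) * (v x - V l) ∂μH[1]
      = ∑ l, I l * V l := fun n => (hsol n).2 v dv V hv
  have hfinal := tendsto_nhds_unique
    (Filter.Tendsto.congr (fun n => hconst n) hmain) tendsto_const_nhds
  exact hfinal
end
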